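/- With the hypotheses of the stated context (finite monoid S which is an LRBG, elements e_y ∈ ℂ[S] for idempotent y that are constant on ∼-classes and satisfy Saliola's property, and R_t := H_t·e_{ω t}), the following product formula holds for all s, t ∈ S: H_s·R_t = R_{s·t} if (ω s)·(ω t) ∼ ω t (i.e. supp(s^ω) ≤ supp(t^ω) in the support lattice), and H_s·R_t = 0 otherwise. -/
import Mathlib


/-- The support relation `s ∼ t` on a left regular band of groups:
`(ω s)·t = s` and `(ω t)·s = t`. -/
def LRBGsim {S : Type*} [Mul S] (ω : S → S) (s t : S) : Prop :=
  ω s * t = s ∧ ω t * s = t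


section Aux

variable {S : Type*} [Monoid S]

lemma aux_pow_idem {x : S} (hx : x * x = x) : ∀ n : ℕ, x ^ (n + 1) = x
  | 0 => pow_one x
  | n + 1 => by rw [pow_succ, aux_pow_idem hx n, hx]

lemma aux_iter (s : S) : ∀ n : ℕ, (fun t => t * s)^[n] s = s ^ (n + 1)
  | 0 => by simp
  | n + 1 => by
      rw [Function.iterate_succ_apply', aux_iter s n]
      simp [pow_succ]

lemma aux_omega_pow (ω : S → S)
    (hpow : ∀ s : S, ∃ n : ℕ, ω s = (fun t => t * s)^[n] s) (s : S) :
    ∃ n : ℕ, ω s = s ^ (n + 1) := by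
  obtain ⟨n, hn⟩ := hpow s
  exact ⟨n, hn.trans (aux_iter s n)⟩

lemma aux_omega_idem (ω : S → S)
    (hpow : ∀ s : S, ∃ n : ℕ, ω s = (fun t => t * s)^[n] s)
    {x : S} (hx : x * x = x) : ω x = x := by
  obtain ⟨n, hn⟩ := aux_omega_pow ω hpow x
  rw [hn, aux_pow_idem hx]

lemma aux_exe (ω : S → S)
    (hpow : ∀ s : S, ∃ n : ℕ, ω s = (fun t => t * s)^[n] s)
    (lrbg2 : ∀ s t : S, s * t * ω s = s * t)
    {x : S} (hx : x * x = x) (y : S) : x * y * x = x * y := by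
  have h := lrbg2 x y
  rwa [aux_omega_idem ω hpow hx] at h

lemma aux_smul_omega (ω : S → S)
    (lrbg2 : ∀ s t : S, s * t * ω s = s * t) (s : S) : s * ω s = s := by
  simpa using lrbg2 s 1

lemma aux_ost_ot (ω : S → S)
    (hpow : ∀ s : S, ∃ n : ℕ, ω s = (fun t => t * s)^[n] s)
    (lrbg2 : ∀ s t : S, s * t * ω s = s * t) (s t : S) :
    ω (s * t) * ω t = ω (s * t) := by
  obtain ⟨c, hc⟩ := aux_omega_pow ω hpow (s * t)
  rw [hc, pow_succ, mul_assoc, mul_assoc, aux_smul_omega ω lrbg2 t]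

lemma aux_ost_os (ω : S → S)
    (hpow : ∀ s : S, ∃ n : ℕ, ω s = (fun t => t * s)^[n] s)
    (lrbg2 : ∀ s t : S, s * t * ω s = s * t) (s t : S) :
    ω (s * t) * ω s = ω (s * t) := by
  obtain ⟨c, hc⟩ := aux_omega_pow ω hpow (s * t)
  rw [hc, pow_succ, mul_assoc, lrbg2 s t]

lemma aux_keyA (ω : S → S)
    (hidem : ∀ s : S, ω s * ω s = ω s)
    (hpow : ∀ s : S, ∃ n : ℕ, ω s = (fun t => t * s)^[n] s)
    (lrbg1 : ∀ s : S, ω s * s = s)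
    (lrbg2 : ∀ s t : S, s * t * ω s = s * t)
    (s t : S) (hyp : ω t * ω s = ω t) : ω t * ω (s * t) = ω t := by
  obtain ⟨a, ha⟩ := aux_omega_pow ω hpow t
  obtain ⟨b, hb⟩ := aux_omega_pow ω hpow s
  obtain ⟨c, hc⟩ := aux_omega_pow ω hpow (s * t)
  have he : ω t * ω t = ω t := hidem t
  have het : ω t * t = t := lrbg1 t
  set e := ω t with hedef
  have exe : ∀ y : S, e * y * e = e * y := fun y => aux_exe ω hpow lrbg2 he y
  have exe' : ∀ x y : S, e * (x * (e * y)) = e * (x * y) := by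
    intro x y
    calc e * (x * (e * y)) = e * x * e * y := by rw [← mul_assoc, ← mul_assoc]
      _ = e * x * y := by rw [exe]
      _ = e * (x * y) := by rw [mul_assoc]
  set z := e * (s * t) with hzdef
  set w := t ^ a * (e * s ^ b) with hwdef
  have hzk : ∀ k : ℕ, z ^ (k + 1) = e * (s * t) ^ (k + 1) := by
    intro k
    induction k with
    | zero => rw [zero_add, pow_one, pow_one]
    | succ k ih =>
        calc z ^ (k + 1 + 1) = z ^ (k + 1) * z := pow_succ z (k + 1)
          _ = e * (s * t) ^ (k + 1) * (e * (s * t)) := by rw [ih]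
          _ = e * (s * t) ^ (k + 1) * e * (s * t) := (mul_assoc _ _ _).symm
          _ = e * (s * t) ^ (k + 1) * (s * t) := by rw [exe]
          _ = e * ((s * t) ^ (k + 1) * (s * t)) := mul_assoc _ _ _
          _ = e * (s * t) ^ (k + 1 + 1) := by rw [← pow_succ]
  have hzw : z * w = e := by
    calc z * w = (e * (s * t)) * (t ^ a * (e * s ^ b)) := by rw [hzdef, hwdef]
      _ = e * (s * (t * (t ^ a * (e * s ^ b)))) := by rw [mul_assoc, mul_assoc]
      _ = e * (s * ((t * t ^ a) * (e * s ^ b))) := by rw [← mul_assoc t]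
      _ = e * (s * (t ^ (a + 1) * (e * s ^ b))) := by rw [← pow_succ']
      _ = e * (s * (e * (e * s ^ b))) := by rw [← ha]
      _ = e * (s * ((e * e) * s ^ b)) := by rw [← mul_assoc e e]
      _ = e * (s * (e * s ^ b)) := by rw [he]
      _ = e * (s * s ^ b) := exe' s (s ^ b)
      _ = e * s ^ (b + 1) := by rw [← pow_succ']
      _ = e * ω s := by rw [← hb]
      _ = e := hyp
  have hwz : w * z = e := by
    calc w * z = (t ^ a * (e * s ^ b)) * (e * (s * t)) := by rw [hzdef, hwdef]
      _ = t ^ a * (e * (s ^ b * (e * (s * t)))) := by rw [mul_assoc, mul_assoc]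
      _ = t ^ a * (e * (s ^ b * (s * t))) := by rw [exe']
      _ = t ^ a * (e * ((s ^ b * s) * t)) := by rw [← mul_assoc (s ^ b) s t]
      _ = t ^ a * (e * (s ^ (b + 1) * t)) := by rw [← pow_succ]
      _ = t ^ a * ((e * s ^ (b + 1)) * t) := by rw [← mul_assoc e]
      _ = t ^ a * ((e * ω s) * t) := by rw [← hb]
      _ = t ^ a * (e * t) := by rw [hyp]
      _ = t ^ a * t := by rw [het]
      _ = t ^ (a + 1) := (pow_succ t a).symm
      _ = e := ha.symm
  have hze : ∀ k : ℕ, z ^ (k + 1) * e = z ^ (k + 1) := by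
    intro k
    rw [hzk k]
    exact exe ((s * t) ^ (k + 1))
  have hzwk : ∀ k : ℕ, z ^ (k + 1) * w ^ (k + 1) = e := by
    intro k
    induction k with
    | zero => rw [zero_add, pow_one, pow_one]; exact hzw
    | succ k ih =>
        calc z ^ (k + 1 + 1) * w ^ (k + 1 + 1)
            = (z ^ (k + 1) * z) * (w * w ^ (k + 1)) := by rw [pow_succ z (k + 1), pow_succ' w (k + 1)]
          _ = z ^ (k + 1) * ((z * w) * w ^ (k + 1)) := by
              rw [mul_assoc, ← mul_assoc z w]
          _ = z ^ (k + 1) * (e * w ^ (k + 1)) := by rw [hzw]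
          _ = (z ^ (k + 1) * e) * w ^ (k + 1) := (mul_assoc _ _ _).symm
          _ = z ^ (k + 1) * w ^ (k + 1) := by rw [hze k]
          _ = e := ih
  have hvv : (s * t) ^ (c + 1) * (s * t) ^ (c + 1) = (s * t) ^ (c + 1) := by
    rw [← hc]; exact hidem (s * t)
  have hzz : z ^ (c + 1) * z ^ (c + 1) = z ^ (c + 1) := by
    rw [hzk c]
    calc (e * (s * t) ^ (c + 1)) * (e * (s * t) ^ (c + 1))
        = ((e * (s * t) ^ (c + 1)) * e) * (s * t) ^ (c + 1) := (mul_assoc _ _ _).symm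
      _ = (e * (s * t) ^ (c + 1)) * (s * t) ^ (c + 1) := by rw [exe]
      _ = e * ((s * t) ^ (c + 1) * (s * t) ^ (c + 1)) := mul_assoc _ _ _
      _ = e * (s * t) ^ (c + 1) := by rw [hvv]
  have hfinal : z ^ (c + 1) = e := by
    calc z ^ (c + 1) = z ^ (c + 1) * e := (hze c).symm
      _ = z ^ (c + 1) * (z ^ (c + 1) * w ^ (c + 1)) := by rw [hzwk c]
      _ = (z ^ (c + 1) * z ^ (c + 1)) * w ^ (c + 1) := (mul_assoc _ _ _).symm
      _ = z ^ (c + 1) * w ^ (c + 1) := by rw [hzz]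
      _ = e := hzwk c
  calc e * ω (s * t) = e * (s * t) ^ (c + 1) := by rw [hc]
    _ = z ^ (c + 1) := (hzk c).symm
    _ = e := hfinal

lemma aux_keyB (ω : S → S)
    (hpow : ∀ s : S, ∃ n : ℕ, ω s = (fun t => t * s)^[n] s)
    (lrbg2 : ∀ s t : S, s * t * ω s = s * t)
    (s t : S) (hyp : ω t * ω (s * t) = ω t) : ω t * ω s = ω t := by
  calc ω t * ω s = (ω t * ω (s * t)) * ω s := by rw [hyp]
    _ = ω t * (ω (s * t) * ω s) := mul_assoc _ _ _
    _ = ω t * ω (s * t) := by rw [aux_ost_os ω hpow lrbg2 s t]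
    _ = ω t := hyp

end Aux

/-- For a finite monoid `S` which is an LRBG, with elements
`e_y ∈ ℂ[S]` (for idempotent `y`) constant on `∼`-classes and satisfying Saliola's
property, and `R_t := H_t · e_{ω t}`, one has `H_s · R_t = R_{s·t}` if
`(ω s)·(ω t) ∼ ω t`, and `H_s · R_t = 0` otherwise. -/
theorem lrbg_H_R_product_formula {S : Type*} [Monoid S] [Fintype S] (ω : S → S)
    (hidem : ∀ s : S, ω s * ω s = ω s)
    (hpow : ∀ s : S, ∃ n : ℕ, ω s = (fun t => t * s)^[n] s)
    (lrbg1 : ∀ s : S, ω s * s = s)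
    (lrbg2 : ∀ s t : S, s * t * ω s = s * t)
    (e : S → MonoidAlgebra ℂ S)
    (heconst : ∀ y y' : S, y * y = y → y' * y' = y' → LRBGsim ω y y' → e y = e y')
    (hsaliola : ∀ x y : S, x * x = x → y * y = y → ¬ LRBGsim ω (x * y) y →
      (MonoidAlgebra.single x 1 : MonoidAlgebra ℂ S) * e y = 0) :
    ∀ s t : S,
      (LRBGsim ω (ω s * ω t) (ω t) →
        (MonoidAlgebra.single s 1 : MonoidAlgebra ℂ S) *
            (MonoidAlgebra.single t 1 * e (ω t)) =
          MonoidAlgebra.single (s * t) 1 * e (ω (s * t))) ∧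
      (¬ LRBGsim ω (ω s * ω t) (ω t) →
        (MonoidAlgebra.single s 1 : MonoidAlgebra ℂ S) *
            (MonoidAlgebra.single t 1 * e (ω t)) = 0) := by
  intro s t
  have hots : ω t * ω s * ω t = ω t * ω s := aux_exe ω hpow lrbg2 (hidem t) (ω s)
  constructor
  · -- the "similar" case
    rintro ⟨h1, h2⟩
    rw [aux_omega_idem ω hpow (hidem t)] at h2
    -- h2 : ω t * (ω s * ω t) = ω t
    have hts : ω t * ω s = ω t := by
      calc ω t * ω s = ω t * ω s * ω t := hots.symm
        _ = ω t * (ω s * ω t) := mul_assoc _ _ _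
        _ = ω t := h2
    have hA : ω t * ω (s * t) = ω t := aux_keyA ω hidem hpow lrbg1 lrbg2 s t hts
    have heq : e (ω t) = e (ω (s * t)) := by
      refine heconst (ω t) (ω (s * t)) (hidem t) (hidem (s * t)) ⟨?_, ?_⟩
      · rw [aux_omega_idem ω hpow (hidem t)]
        exact hA
      · rw [aux_omega_idem ω hpow (hidem (s * t))]
        exact aux_ost_ot ω hpow lrbg2 s t
    rw [← mul_assoc, MonoidAlgebra.single_mul_single, one_mul, heq]
  · -- the "non-similar" case
    intro hnsim
    have hns2 : ¬ LRBGsim ω (ω (s * t) * ω t) (ω t) := by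
      rw [aux_ost_ot ω hpow lrbg2 s t]
      rintro ⟨k1, k2⟩
      rw [aux_omega_idem ω hpow (hidem t)] at k2
      -- k2 : ω t * ω (s * t) = ω t
      have hts : ω t * ω s = ω t := aux_keyB ω hpow lrbg2 s t k2
      apply hnsim
      have hst_idem : (ω s * ω t) * (ω s * ω t) = ω s * ω t := by
        have h4 : ω s * ω t * ω s = ω s * ω t := aux_exe ω hpow lrbg2 (hidem s) (ω t)
        calc (ω s * ω t) * (ω s * ω t) = ((ω s * ω t) * ω s) * ω t :=
              (mul_assoc _ _ _).symm
          _ = (ω s * ω t) * ω t := by rw [h4]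
          _ = ω s * (ω t * ω t) := mul_assoc _ _ _
          _ = ω s * ω t := by rw [hidem t]
      constructor
      · rw [aux_omega_idem ω hpow hst_idem, mul_assoc, hidem t]
      · rw [aux_omega_idem ω hpow (hidem t), ← mul_assoc, hts, hidem t]
    have hz := hsaliola (ω (s * t)) (ω t) (hidem (s * t)) (hidem t) hns2
    rw [← mul_assoc, MonoidAlgebra.single_mul_single, one_mul]
    have h5 : (MonoidAlgebra.single (s * t) (1 : ℂ) : MonoidAlgebra ℂ S) *
        MonoidAlgebra.single (ω (s * t)) 1 = MonoidAlgebra.single (s * t) 1 := by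
      rw [MonoidAlgebra.single_mul_single, one_mul, aux_smul_omega ω lrbg2 (s * t)]
    calc (MonoidAlgebra.single (s * t) (1 : ℂ) : MonoidAlgebra ℂ S) * e (ω t)
        = (MonoidAlgebra.single (s * t) 1 * MonoidAlgebra.single (ω (s * t)) 1) *
            e (ω t) := by rw [h5]
      _ = MonoidAlgebra.single (s * t) 1 *
            (MonoidAlgebra.single (ω (s * t)) 1 * e (ω t)) := mul_assoc _ _ _
      _ = MonoidAlgebra.single (s * t) 1 * 0 := by rw [hz]
      _ = 0 := mul_zero _
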